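/- Let ξ be a non-negative random variable on a probability space with 0 < E[ξ] < ∞. Let φ : [0,∞) → [0,∞) be a convex, continuously differentiable function such that for some constants C > 0 and q ≥ 1 one has φ(x) ≤ C(1 + x^q) for all x ≥ 0, and assume E[ξ^q] < ∞. Then E[ φ( (ξ/(1+ξ)) / E[ξ/(1+ξ)] ) ] ≤ E[ φ( ξ / E[ξ] ) ]. -/

import Mathlib

open MeasureTheory Real

lemma key_convex {φ : ℝ → ℝ} (hconv : ConvexOn ℝ (Set.Ici 0) φ)
    (hd : DifferentiableOn ℝ φ (Set.Ici 0))
    {a b c : ℝ} (ha : (0:ℝ) ≤ a) (hb : (0:ℝ) ≤ b) (hc : (0:ℝ) ≤ c)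
    (hcase : (b ≤ a ∧ a ≤ c) ∨ (c ≤ a ∧ a ≤ b)) :
    φ a - φ b ≤ derivWithin φ (Set.Ici 0) c * (a - b) := by
  have mono := hconv.monotoneOn_derivWithin hd
  rcases hcase with ⟨hba, hac⟩ | ⟨hca, hab⟩
  · rcases eq_or_lt_of_le hba with rfl | hba'
    · simp
    · have h1 : slope φ b a ≤ derivWithin φ (Set.Ici 0) a :=
        hconv.slope_le_derivWithin hb ha hba' (hd a ha)
      have h2 : derivWithin φ (Set.Ici 0) a ≤ derivWithin φ (Set.Ici 0) c :=
        mono ha hc hac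
      rw [slope_def_field] at h1
      have := (div_le_iff₀ (by linarith : (0:ℝ) < a - b)).mp (h1.trans h2)
      linarith
  · rcases eq_or_lt_of_le hab with rfl | hab'
    · simp
    · have h1 : derivWithin φ (Set.Ici 0) a ≤ slope φ a b :=
        hconv.derivWithin_le_slope ha hb hab' (hd a ha)
      have h2 : derivWithin φ (Set.Ici 0) c ≤ derivWithin φ (Set.Ici 0) a :=
        mono hc ha hca
      rw [slope_def_field] at h1
      have := (le_div_iff₀ (by linarith : (0:ℝ) < b - a)).mp (h2.trans h1)
      nlinarith

theorem stmt_4 {Ω : Type*} [MeasurableSpace Ω] (μ : Measure Ω)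
    [IsProbabilityMeasure μ]
    (ξ : Ω → ℝ) (hmeas : Measurable ξ) (hnn : ∀ ω, 0 ≤ ξ ω)
    (hint : Integrable ξ μ) (hpos : 0 < ∫ ω, ξ ω ∂μ)
    (φ : ℝ → ℝ) (hφnn : ∀ x, 0 ≤ x → 0 ≤ φ x)
    (hconv : ConvexOn ℝ (Set.Ici 0) φ)
    (hdiff : ContDiffOn ℝ 1 φ (Set.Ici 0))
    (C q : ℝ) (hC : 0 < C) (hq : 1 ≤ q)
    (hgrowth : ∀ x, 0 ≤ x → φ x ≤ C * (1 + x ^ q))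
    (hmom : Integrable (fun ω => ξ ω ^ q) μ) :
    ∫ ω, φ ((ξ ω / (1 + ξ ω)) / ∫ ω', ξ ω' / (1 + ξ ω') ∂μ) ∂μ ≤
      ∫ ω, φ (ξ ω / ∫ ω', ξ ω' ∂μ) ∂μ := by
  have hden : ∀ ω, (0:ℝ) < 1 + ξ ω := fun ω => by linarith [hnn ω]
  set E := ∫ ω, ξ ω ∂μ with hE_def
  set m := ∫ ω', ξ ω' / (1 + ξ ω') ∂μ with hm_def
  set η : Ω → ℝ := fun ω => ξ ω / (1 + ξ ω) with hη_def
  have hη_nn : ∀ ω, 0 ≤ η ω := fun ω => div_nonneg (hnn ω) (hden ω).le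
  have hη_le : ∀ ω, η ω ≤ ξ ω := fun ω => div_le_self (hnn ω) (by linarith [hnn ω])
  have hη_le1 : ∀ ω, η ω ≤ 1 := fun ω => (div_le_one (hden ω)).2 (by linarith [hnn ω])
  have hη_meas : Measurable η := hmeas.div (measurable_const.add hmeas)
  have hη_int : Integrable η μ := by
    refine (integrable_const (1:ℝ)).mono' hη_meas.aestronglyMeasurable ?_
    filter_upwards with ω
    rw [Real.norm_eq_abs, abs_of_nonneg (hη_nn ω)]
    simpa using hη_le1 ω
  have hE_pos : 0 < E := hpos
  have hm_eq : m = ∫ ω, η ω ∂μ := hm_def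
  have hm_pos : 0 < m := by
    rw [hm_eq]
    rw [integral_pos_iff_support_of_nonneg (fun ω => hη_nn ω) hη_int]
    have h1 := (integral_pos_iff_support_of_nonneg (fun ω => hnn ω) hint).1 hpos
    have hsupp : Function.support η = Function.support ξ := by
      ext ω
      simp only [Function.mem_support, hη_def]
      constructor
      · intro h hξ; simp [hξ] at h
      · intro h h2
        exact h (by
          have := div_eq_zero_iff.mp h2
          rcases this with h3 | h3
          · exact h3
          · exact absurd h3 (hden ω).ne')
    rwa [hsupp]
  have hmE : m ≤ E := by
    rw [hm_eq, hE_def]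
    exact integral_mono hη_int hint hη_le
  set c := (E - m) / (m * E) with hc_def
  have hc : 0 ≤ c := div_nonneg (by linarith) (by positivity)
  set K := derivWithin φ (Set.Ici 0) c with hK_def
  have hd : DifferentiableOn ℝ φ (Set.Ici 0) := hdiff.differentiableOn one_ne_zero
  -- pointwise inequality
  have hpt : ∀ ω, φ (η ω / m) ≤ φ (ξ ω / E) + K * (η ω / m - ξ ω / E) := by
    intro ω
    set x := ξ ω with hx_def
    have hx : 0 ≤ x := hnn ω
    have hdx : (0:ℝ) < 1 + x := hden ω
    have ha : 0 ≤ η ω / m := div_nonneg (hη_nn ω) hm_pos.le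
    have hb : 0 ≤ x / E := div_nonneg hx hE_pos.le
    have hηω : η ω = x / (1 + x) := rfl
    have hcase : (x / E ≤ η ω / m ∧ η ω / m ≤ c) ∨ (c ≤ η ω / m ∧ η ω / m ≤ x / E) := by
      rcases le_or_gt (m * (1 + x)) E with hle | hlt
      · left
        constructor
        · rw [hηω, div_le_div_iff₀ hE_pos hm_pos, div_mul_eq_mul_div, le_div_iff₀ hdx]
          nlinarith
        · rw [hηω, hc_def, div_div, div_le_div_iff₀ (by positivity) (by positivity)]
          nlinarith
      · right
        constructor
        · rw [hηω, hc_def, div_div, div_le_div_iff₀ (by positivity) (by positivity)]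
          nlinarith
        · rw [hηω, div_le_div_iff₀ hm_pos hE_pos, div_mul_eq_mul_div, div_le_iff₀ hdx]
          nlinarith
    have := key_convex hconv hd ha hb hc hcase
    linarith
  -- measurability of compositions
  have hmax : Continuous (fun y : ℝ => max y 0) := continuous_id.max continuous_const
  have hφtilde : Continuous (fun y : ℝ => φ (max y 0)) := by
    refine (hdiff.continuousOn).comp_continuous hmax (fun y => le_max_right y 0)
  have hcomp : ∀ (f : Ω → ℝ), Measurable f → (∀ ω, 0 ≤ f ω) →
      AEStronglyMeasurable (fun ω => φ (f ω)) μ := by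
    intro f hf hf0
    have : (fun ω => φ (f ω)) = (fun y : ℝ => φ (max y 0)) ∘ f := by
      funext ω; simp [max_eq_left (hf0 ω)]
    rw [this]
    exact (hφtilde.measurable.comp hf).aestronglyMeasurable
  -- integrability
  have I1 : Integrable (fun ω => φ (η ω / m)) μ := by
    refine (integrable_const (C * (1 + (1/m) ^ q))).mono'
      (hcomp _ (hη_meas.div_const m) (fun ω => div_nonneg (hη_nn ω) hm_pos.le)) ?_
    filter_upwards with ω
    rw [Real.norm_eq_abs, abs_of_nonneg (hφnn _ (div_nonneg (hη_nn ω) hm_pos.le))]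
    refine (hgrowth _ (div_nonneg (hη_nn ω) hm_pos.le)).trans ?_
    have h1 : η ω / m ≤ 1 / m := by
      gcongr
      exact hη_le1 ω
    have h2 : (η ω / m) ^ q ≤ (1/m) ^ q :=
      Real.rpow_le_rpow (div_nonneg (hη_nn ω) hm_pos.le) h1 (by linarith)
    nlinarith
  have I2 : Integrable (fun ω => φ (ξ ω / E)) μ := by
    have hbound : Integrable (fun ω => C + (C / E ^ q) * ξ ω ^ q) μ :=
      (integrable_const C).add (hmom.const_mul _)
    refine hbound.mono' (hcomp _ (hmeas.div_const E) (fun ω => div_nonneg (hnn ω) hE_pos.le)) ?_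
    filter_upwards with ω
    rw [Real.norm_eq_abs, abs_of_nonneg (hφnn _ (div_nonneg (hnn ω) hE_pos.le))]
    refine (hgrowth _ (div_nonneg (hnn ω) hE_pos.le)).trans ?_
    refine le_of_eq ?_
    rw [Real.div_rpow (hnn ω) hE_pos.le]
    ring
  have hg : Integrable (fun ω => K * (η ω / m - ξ ω / E)) μ := by
    have := ((hη_int.div_const m).sub (hint.div_const E)).const_mul K
    simpa [Pi.sub_apply, mul_sub] using this
  have I3 : Integrable (fun ω => φ (ξ ω / E) + K * (η ω / m - ξ ω / E)) μ := I2.add hg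
  -- normalized means
  have hint_u : ∫ ω, ξ ω / E ∂μ = 1 := by
    rw [integral_div]; exact div_self hE_pos.ne'
  have hint_h : ∫ ω, η ω / m ∂μ = 1 := by
    rw [integral_div, ← hm_eq]; exact div_self hm_pos.ne'
  have main : ∫ ω, φ (η ω / m) ∂μ ≤ ∫ ω, φ (ξ ω / E) ∂μ := by
    calc ∫ ω, φ (η ω / m) ∂μ
        ≤ ∫ ω, (φ (ξ ω / E) + K * (η ω / m - ξ ω / E)) ∂μ :=
          integral_mono I1 I3 hpt
      _ = ∫ ω, φ (ξ ω / E) ∂μ + K * ((∫ ω, η ω / m ∂μ) - ∫ ω, ξ ω / E ∂μ) := by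
          rw [integral_add I2 hg, integral_const_mul,
            integral_sub (hη_int.div_const m) (hint.div_const E)]
      _ = ∫ ω, φ (ξ ω / E) ∂μ := by rw [hint_h, hint_u]; ring
  exact main
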